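/- (de Moivre–Laplace near the mean with error O(1/n)) Let q ∈ (0,1) and c > 0 be fixed real numbers. There exist constants C > 0 and N > 0 such that for all integers n > N and all integers k with 0 ≤ k ≤ n and |k − nq| ≤ c, |φ_q(k,n) · √(2πnq(1−q)) − 1| ≤ C/n. -/

import Mathlib

open Finset

/-- The binomial probability mass function. -/
noncomputable def phi (q : ℝ) (k n : ℕ) : ℝ :=
  (n.choose k : ℝ) * q ^ k * (1 - q) ^ (n - k)


open Finset Filter Nat Real Stirling
open scoped Topology

lemma stirling_ge (j : ℕ) : Real.sqrt Real.pi ≤ stirlingSeq (j + 1) := by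
  refine le_of_tendsto tendsto_stirlingSeq_sqrt_pi ?_
  filter_upwards [eventually_ge_atTop (j + 1)] with p hp
  obtain ⟨m, rfl⟩ : ∃ m, p = m + 1 := ⟨p - 1, by omega⟩
  exact stirlingSeq'_antitone (by omega)

lemma stirling_tele (m p : ℕ) :
    Real.log (stirlingSeq (m + 2)) - Real.log (stirlingSeq (m + 2 + p)) ≤
      1 / 4 * (1 / (m + 1 : ℝ) - 1 / (m + 1 + p : ℝ)) := by
  induction p with
  | zero => simp
  | succ p ih =>
    have h1 := log_stirlingSeq_sub_log_stirlingSeq_succ (m + p + 1 + 1)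
    set A : ℝ := (m : ℝ) + 1 + p with hA
    have hA0 : (0:ℝ) < A := by positivity
    have key : 1 / (4 * ((m + p + 1 + 1 : ℕ) : ℝ) ^ 2) ≤ 1 / 4 * (1 / A - 1 / (A + 1)) := by
      have hAB : 1 / A - 1 / (A + 1) = 1 / (A * (A + 1)) := by
        field_simp; ring
      have h4 : (1:ℝ)/4 * (1/(A*(A+1))) = 1/(4*(A*(A+1))) := by
        field_simp
      rw [hAB, h4]
      have hcast : ((m + p + 1 + 1 : ℕ) : ℝ) = A + 1 := by push_cast [hA]; ring
      rw [hcast]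
      apply one_div_le_one_div_of_le (by positivity)
      nlinarith
    have e1 : m + 2 + (p + 1) = m + p + 1 + 1 + 1 := by omega
    have e2 : m + 2 + p = m + p + 1 + 1 := by omega
    rw [e1]
    rw [e2] at ih
    have hc1 : ((p + 1 : ℕ) : ℝ) = (p : ℝ) + 1 := by push_cast; ring
    push_cast
    have : 1 / (m + 1 : ℝ) - 1 / ((m:ℝ) + 1 + ((p:ℝ) + 1)) =
        (1 / (m + 1 : ℝ) - 1 / A) + (1 / A - 1 / (A + 1)) := by rw [hA]; ring_nf
    linarith [this]

lemma stirling_eps_le (m : ℕ) :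
    Real.log (stirlingSeq (m + 2)) - Real.log (Real.sqrt Real.pi) ≤ 1 / (4 * ((m:ℝ) + 1)) := by
  have hpi : (0:ℝ) < Real.sqrt Real.pi := Real.sqrt_pos.mpr Real.pi_pos
  have hs : Tendsto (fun p : ℕ => stirlingSeq (m + 2 + p)) atTop (𝓝 (Real.sqrt Real.pi)) := by
    have := tendsto_stirlingSeq_sqrt_pi.comp (tendsto_add_atTop_nat (m + 2))
    exact this.congr (fun p => by simp [Nat.add_comm])
  have hlim : Tendsto (fun p : ℕ => Real.log (stirlingSeq (m + 2)) -
      Real.log (stirlingSeq (m + 2 + p))) atTop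
      (𝓝 (Real.log (stirlingSeq (m + 2)) - Real.log (Real.sqrt Real.pi))) :=
    tendsto_const_nhds.sub ((Real.continuousAt_log hpi.ne').tendsto.comp hs)
  have hlim2 : Tendsto (fun p : ℕ => 1 / 4 * (1 / ((m:ℝ) + 1) - 1 / ((m:ℝ) + 1 + p))) atTop
      (𝓝 (1 / 4 * (1 / ((m:ℝ) + 1) - 0))) := by
    refine Tendsto.const_mul _ (tendsto_const_nhds.sub ?_)
    have h : Tendsto (fun p : ℕ => ((m:ℝ) + 1 + p)) atTop atTop :=
      tendsto_atTop_add_const_left _ _ tendsto_natCast_atTop_atTop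
    simpa [one_div, Pi.inv_def] using h.inv_tendsto_atTop
  have := le_of_tendsto_of_tendsto' hlim hlim2 (fun p => stirling_tele m p)
  calc Real.log (stirlingSeq (m + 2)) - Real.log (Real.sqrt Real.pi)
      ≤ 1 / 4 * (1 / ((m:ℝ) + 1) - 0) := this
    _ = 1 / (4 * ((m:ℝ) + 1)) := by rw [sub_zero]; field_simp

lemma eps_bounds {j : ℕ} (hj : 2 ≤ j) :
    0 ≤ Real.log (stirlingSeq j) - Real.log (Real.sqrt Real.pi) ∧
    Real.log (stirlingSeq j) - Real.log (Real.sqrt Real.pi) ≤ 1 / (2 * (j:ℝ)) := by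
  obtain ⟨m, rfl⟩ : ∃ m, j = m + 2 := ⟨j - 2, by omega⟩
  constructor
  · have h := stirling_ge (m + 1)
    have := Real.log_le_log (Real.sqrt_pos.mpr Real.pi_pos) h
    linarith
  · refine (stirling_eps_le m).trans ?_
    rw [div_le_div_iff₀ (by positivity) (by positivity)]
    push_cast; nlinarith [Nat.cast_nonneg (α := ℝ) m]

lemma xlog_bounds {a x : ℝ} (ha : 0 < a) (hx : 0 < x) :
    x - a ≤ x * Real.log (x / a) ∧ x * Real.log (x / a) ≤ (x - a) + (x - a) ^ 2 / a := by
  have hxa : (0:ℝ) < x / a := by positivity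
  have hup : Real.log (x / a) ≤ x / a - 1 := Real.log_le_sub_one_of_pos hxa
  have hlo : 1 - (x / a)⁻¹ ≤ Real.log (x / a) := Real.one_sub_inv_le_log_of_pos hxa
  have hinv : (x / a)⁻¹ = a / x := by field_simp
  constructor
  · have := mul_le_mul_of_nonneg_left hlo hx.le
    rw [hinv] at this
    have h2 : x * (1 - a / x) = x - a := by field_simp
    linarith [h2 ▸ this]
  · have := mul_le_mul_of_nonneg_left hup hx.le
    have h2 : x * (x / a - 1) = (x - a) + (x - a) ^ 2 / a := by field_simp; ring
    linarith [h2 ▸ this]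

lemma abs_log_one_add_le {d : ℝ} (hd : |d| ≤ 1 / 2) : |Real.log (1 + d)| ≤ 2 * |d| := by
  have h1 : -(1/2 : ℝ) ≤ d := by cases abs_le.mp hd; linarith
  have h2 : d ≤ 1/2 := by cases abs_le.mp hd; assumption
  have hpos : (0:ℝ) < 1 + d := by linarith
  have hup : Real.log (1 + d) ≤ d := by
    have := Real.log_le_sub_one_of_pos hpos; linarith
  have hlo : d / (1 + d) ≤ Real.log (1 + d) := by
    have h := Real.one_sub_inv_le_log_of_pos hpos
    have he : 1 - (1 + d)⁻¹ = d / (1 + d) := by field_simp; ring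
    linarith [he ▸ h]
  rw [abs_le]
  refine ⟨?_, by by_cases h : 0 ≤ d <;> [skip; skip] <;> cases abs_cases d <;> linarith⟩
  rcases le_or_gt 0 d with h | h
  · have h0 : 0 ≤ d / (1 + d) := by positivity
    cases abs_cases d <;> nlinarith
  · have habs : |d| = -d := abs_of_neg h
    have : 2 * d ≤ d / (1 + d) := by
      rw [le_div_iff₀ hpos]; nlinarith
    rw [habs]; linarith

lemma log_factorial_eq (j : ℕ) (hj : 1 ≤ j) :
    Real.log (j ! : ℝ) = Real.log (stirlingSeq j) + 1 / 2 * (Real.log 2 + Real.log j)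
      + (j : ℝ) * (Real.log j - 1) := by
  have hjr : (0:ℝ) < (j:ℝ) := by exact_mod_cast hj
  have h := log_stirlingSeq_formula j
  have h2 : Real.log (2 * (j:ℝ)) = Real.log 2 + Real.log j :=
    Real.log_mul two_ne_zero hjr.ne'
  have h3 : Real.log ((j:ℝ) / Real.exp 1) = Real.log j - 1 := by
    rw [Real.log_div hjr.ne' (Real.exp_ne_zero 1), Real.log_exp]
  rw [h2, h3] at h
  linarith

lemma phi_eq_exp (q : ℝ) (hq0 : 0 < q) (hq1 : q < 1) (k m : ℕ) (hk : 1 ≤ k) (hm : 1 ≤ m) :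
    phi q k (k + m) * Real.sqrt (2 * Real.pi * (↑(k + m)) * q * (1 - q)) =
    Real.exp (
      ((Real.log (stirlingSeq (k + m)) - Real.log (Real.sqrt Real.pi))
        - (Real.log (stirlingSeq k) - Real.log (Real.sqrt Real.pi))
        - (Real.log (stirlingSeq m) - Real.log (Real.sqrt Real.pi)))
      + 1 / 2 * Real.log ((((k:ℝ) + m) ^ 2 * (q * (1 - q))) / ((k:ℝ) * m))
      - ((k:ℝ) * Real.log ((k:ℝ) / (((k:ℝ) + m) * q))
         + (m:ℝ) * Real.log ((m:ℝ) / (((k:ℝ) + m) * (1 - q))))) := by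
  have hq1' : (0:ℝ) < 1 - q := by linarith
  have hkr : (0:ℝ) < (k:ℝ) := by exact_mod_cast hk
  have hmr : (0:ℝ) < (m:ℝ) := by exact_mod_cast hm
  have hnr : (0:ℝ) < (k:ℝ) + m := by linarith
  have hnn : ((k + m : ℕ) : ℝ) = (k:ℝ) + m := by push_cast; ring
  have hX : (0:ℝ) < 2 * Real.pi * ((k:ℝ) + m) * q * (1 - q) :=
    mul_pos (mul_pos (mul_pos (mul_pos two_pos Real.pi_pos) hnr) hq0) hq1'
  have hchoosepos : (0:ℝ) < ((k + m).choose k : ℝ) := by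
    exact_mod_cast Nat.choose_pos (Nat.le_add_right k m)
  have hP1 : (0:ℝ) < 2 * Real.pi * ((k:ℝ) + m) := mul_pos (by positivity) hnr
  have hP2 : (0:ℝ) < 2 * Real.pi * ((k:ℝ) + m) * q := mul_pos hP1 hq0
  have hphipos : 0 < phi q k (k + m) := by
    unfold phi
    exact mul_pos (mul_pos hchoosepos (pow_pos hq0 _)) (pow_pos hq1' _)
  have hLHS : 0 < phi q k (k + m) * Real.sqrt (2 * Real.pi * (↑(k + m)) * q * (1 - q)) := by
    rw [hnn]; exact mul_pos hphipos (Real.sqrt_pos.mpr hX)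
  rw [← Real.exp_log hLHS]
  congr 1
  -- expand log of LHS
  have hfack := log_factorial_eq k hk
  have hfacm := log_factorial_eq m hm
  have hfacn := log_factorial_eq (k + m) (by omega)
  have hchoose : Real.log (((k + m).choose k : ℝ)) =
      Real.log ((k + m)! : ℝ) - Real.log (k ! : ℝ) - Real.log (m ! : ℝ) := by
    have h := Nat.choose_mul_factorial_mul_factorial (Nat.le_add_right k m)
    rw [Nat.add_sub_cancel_left] at h
    have hcast : ((k + m).choose k : ℝ) * (k ! : ℝ) * (m ! : ℝ) = ((k + m)! : ℝ) := by
      exact_mod_cast congrArg (Nat.cast : ℕ → ℝ) h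
    have hkf : (0:ℝ) < (k ! : ℝ) := by exact_mod_cast k.factorial_pos
    have hmf : (0:ℝ) < (m ! : ℝ) := by exact_mod_cast m.factorial_pos
    rw [← hcast, Real.log_mul (by positivity) hmf.ne', Real.log_mul hchoosepos.ne' hkf.ne']
    ring
  have e1 : Real.log (phi q k (k + m) * Real.sqrt (2 * Real.pi * (↑(k + m)) * q * (1 - q))) =
      Real.log ((k + m).choose k : ℝ) + (k:ℝ) * Real.log q + (m:ℝ) * Real.log (1 - q)
      + 1/2 * Real.log (2 * Real.pi * ((k:ℝ) + m) * q * (1 - q)) := by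
    unfold phi
    rw [Nat.add_sub_cancel_left, hnn]
    rw [Real.log_mul (mul_pos (mul_pos hchoosepos (pow_pos hq0 k)) (pow_pos hq1' m)).ne'
          (Real.sqrt_pos.mpr hX).ne',
        Real.log_mul (mul_pos hchoosepos (pow_pos hq0 k)).ne' (pow_ne_zero _ hq1'.ne'),
        Real.log_mul hchoosepos.ne' (pow_ne_zero _ hq0.ne'),
        Real.log_pow, Real.log_pow, Real.log_sqrt hX.le]
    push_cast
    ring
  rw [e1, hchoose, hfack, hfacm, hfacn]
  -- expand remaining composite logs
  have e2 : Real.log (2 * Real.pi * ((k:ℝ) + m) * q * (1 - q)) =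
      Real.log 2 + Real.log Real.pi + Real.log ((k:ℝ) + m) + Real.log q + Real.log (1 - q) := by
    rw [Real.log_mul hP2.ne' hq1'.ne', Real.log_mul hP1.ne' hq0.ne',
        Real.log_mul (by positivity) hnr.ne', Real.log_mul two_ne_zero Real.pi_ne_zero]
  have e3 : Real.log ((((k:ℝ) + m) ^ 2 * (q * (1 - q))) / ((k:ℝ) * m)) =
      2 * Real.log ((k:ℝ) + m) + Real.log q + Real.log (1 - q)
        - Real.log (k:ℝ) - Real.log (m:ℝ) := by
    rw [Real.log_div (mul_pos (pow_pos hnr 2) (mul_pos hq0 hq1')).ne' (mul_pos hkr hmr).ne',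
        Real.log_mul (pow_pos hnr 2).ne' (mul_pos hq0 hq1').ne',
        Real.log_mul hq0.ne' hq1'.ne', Real.log_mul hkr.ne' hmr.ne', Real.log_pow]
    push_cast; ring
  have e4 : Real.log ((k:ℝ) / (((k:ℝ) + m) * q)) =
      Real.log (k:ℝ) - Real.log ((k:ℝ) + m) - Real.log q := by
    rw [Real.log_div hkr.ne' (mul_pos hnr hq0).ne', Real.log_mul hnr.ne' hq0.ne']
    ring
  have e5 : Real.log ((m:ℝ) / (((k:ℝ) + m) * (1 - q))) =
      Real.log (m:ℝ) - Real.log ((k:ℝ) + m) - Real.log (1 - q) := by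
    rw [Real.log_div hmr.ne' (mul_pos hnr hq1').ne', Real.log_mul hnr.ne' hq1'.ne']
    ring
  have e6 : Real.log (Real.sqrt Real.pi) = Real.log Real.pi / 2 :=
    Real.log_sqrt Real.pi_pos.le
  rw [e2, e3, e4, e5, e6, hnn]
  push_cast
  ring

lemma habs3 (X Y Z : ℝ) : |X + Y - Z| ≤ |X| + |Y| + |Z| :=
  (abs_sub (X+Y) Z).trans (by linarith [abs_add_le X Y])

/-- Lemma 4.1 (de Moivre–Laplace, second part): uniformly over |k − nq| ≤ c,
φ_q(k,n) = (2πnq(1−q))^{-1/2} (1 + O(1/n)). -/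
theorem deMoivreLaplace_center (q c : ℝ) (hq0 : 0 < q) (hq1 : q < 1) (hc : 0 < c) :
    ∃ C > (0 : ℝ), ∃ N : ℕ, ∀ n : ℕ, n > N → ∀ k : ℕ, k ≤ n →
      |(k : ℝ) - n * q| ≤ c →
      |phi q k n * Real.sqrt (2 * Real.pi * n * q * (1 - q)) - 1| ≤ C / n := by
  have hq1' : (0:ℝ) < 1 - q := by linarith
  have ha : (0:ℝ) < q * (1 - q) := mul_pos hq0 hq1'
  obtain ⟨C0, hC0_def⟩ : ∃ x : ℝ, x = 1/2 + 1/(q*(1-q)) + c*(1+c)/(q*(1-q)) + c^2/(q*(1-q)) :=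
    ⟨_, rfl⟩
  have hC0pos : 0 < C0 := by rw [hC0_def]; positivity
  refine ⟨2 * C0, by linarith, ⌈2*(2+c)/q + 2*(2+c)/(1-q) + 2*c*(1+c)/(q*(1-q)) + C0⌉₊, ?_⟩
  intro n hn k hkn hu
  obtain ⟨m, rfl⟩ : ∃ m, n = k + m := ⟨n - k, by omega⟩
  push_cast at hu ⊢
  have hMn : 2*(2+c)/q + 2*(2+c)/(1-q) + 2*c*(1+c)/(q*(1-q)) + C0 ≤ (k:ℝ) + m := by
    have h1 := Nat.ceil_le.mp hn.le
    push_cast at h1; linarith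
  clear hn
  have ht1 : (0:ℝ) ≤ 2*(2+c)/q := by positivity
  have ht2 : (0:ℝ) ≤ 2*(2+c)/(1-q) := by positivity
  have ht3 : (0:ℝ) ≤ 2*c*(1+c)/(q*(1-q)) := by positivity
  have hnq : 2*(2+c) ≤ ((k:ℝ) + m) * q := by
    have h1 : 2*(2+c)/q ≤ (k:ℝ) + m := by linarith
    have h := mul_le_mul_of_nonneg_right h1 hq0.le
    rwa [div_mul_cancel₀ _ hq0.ne'] at h
  have hn1q : 2*(2+c) ≤ ((k:ℝ) + m) * (1-q) := by
    have h1 : 2*(2+c)/(1-q) ≤ (k:ℝ) + m := by linarith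
    have h := mul_le_mul_of_nonneg_right h1 hq1'.le
    rwa [div_mul_cancel₀ _ hq1'.ne'] at h
  have hnc : 2*c*(1+c) ≤ ((k:ℝ) + m) * (q*(1-q)) := by
    have h1 : 2*c*(1+c)/(q*(1-q)) ≤ (k:ℝ) + m := by linarith
    have h := mul_le_mul_of_nonneg_right h1 ha.le
    rwa [div_mul_cancel₀ _ ha.ne'] at h
  have hnC0 : C0 ≤ (k:ℝ) + m := by linarith
  clear hMn ht1 ht2 ht3
  have hul : ((k:ℝ) + m) * q - c ≤ (k:ℝ) := by
    have := abs_le.mp hu; linarith [this.1]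
  have huu : (k:ℝ) ≤ ((k:ℝ) + m) * q + c := by
    have := abs_le.mp hu; linarith [this.2]
  have hkr2 : (2:ℝ) ≤ (k:ℝ) := by nlinarith
  have hmr2 : (2:ℝ) ≤ (m:ℝ) := by nlinarith
  have hk2 : 2 ≤ k := by exact_mod_cast hkr2
  have hm2 : 2 ≤ m := by exact_mod_cast hmr2
  have hkrpos : (0:ℝ) < (k:ℝ) := by linarith
  have hmrpos : (0:ℝ) < (m:ℝ) := by linarith
  have hnrpos : (0:ℝ) < (k:ℝ) + m := by linarith
  have hnqpos : (0:ℝ) < ((k:ℝ) + m) * q := mul_pos hnrpos hq0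
  have hn1qpos : (0:ℝ) < ((k:ℝ) + m) * (1-q) := mul_pos hnrpos hq1'
  -- half bounds
  have hAB : ((k:ℝ)+m)*q + ((k:ℝ)+m)*(1-q) = (k:ℝ)+m := by ring
  have hkhalf : ((k:ℝ) + m) * q ≤ 2 * k := by linarith
  have hmhalf : ((k:ℝ) + m) * (1-q) ≤ 2 * m := by linarith
  -- the exponential identity
  have hexp := phi_eq_exp q hq0 hq1 k m (by omega) (by omega)
  push_cast at hexp
  rw [hexp]
  clear hexp
  -- epsilon bounds
  obtain ⟨hen0, hen1⟩ := eps_bounds (show 2 ≤ k + m by omega)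
  obtain ⟨hek0, hek1⟩ := eps_bounds hk2
  obtain ⟨hem0, hem1⟩ := eps_bounds hm2
  push_cast at hen1
  have hE1 : |((Real.log (stirlingSeq (k + m)) - Real.log (Real.sqrt Real.pi))
        - (Real.log (stirlingSeq k) - Real.log (Real.sqrt Real.pi))
        - (Real.log (stirlingSeq m) - Real.log (Real.sqrt Real.pi)))| ≤
      1/(2*((k:ℝ)+m)) + 1/(((k:ℝ)+m)*q) + 1/(((k:ℝ)+m)*(1-q)) := by
    have b1 : 1/(2*(k:ℝ)) ≤ 1/(((k:ℝ)+m)*q) :=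
      one_div_le_one_div_of_le hnqpos (by linarith)
    have b2 : 1/(2*(m:ℝ)) ≤ 1/(((k:ℝ)+m)*(1-q)) :=
      one_div_le_one_div_of_le hn1qpos (by linarith)
    have b3 : (0:ℝ) ≤ 1/(2*((k:ℝ)+m)) := by positivity
    rw [abs_le]
    constructor <;> linarith
  -- entropy term bounds
  have hx1 := xlog_bounds hnqpos hkrpos
  have hx2 := xlog_bounds hn1qpos hmrpos
  have hsq1 : ((k:ℝ) - ((k:ℝ)+m)*q)^2 ≤ c^2 :=
    sq_le_sq' (by linarith) (by linarith)
  have hsq2 : ((m:ℝ) - ((k:ℝ)+m)*(1-q))^2 = ((k:ℝ) - ((k:ℝ)+m)*q)^2 := by ring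
  have hE3 : |(k:ℝ) * Real.log ((k:ℝ) / (((k:ℝ) + m) * q))
         + (m:ℝ) * Real.log ((m:ℝ) / (((k:ℝ) + m) * (1 - q)))| ≤
      c^2 / (((k:ℝ)+m) * (q*(1-q))) := by
    have hlo : (0:ℝ) ≤ (k:ℝ) * Real.log ((k:ℝ) / (((k:ℝ) + m) * q))
         + (m:ℝ) * Real.log ((m:ℝ) / (((k:ℝ) + m) * (1 - q))) := by
      linarith [hx1.1, hx2.1, hAB]
    have hup : (k:ℝ) * Real.log ((k:ℝ) / (((k:ℝ) + m) * q))
         + (m:ℝ) * Real.log ((m:ℝ) / (((k:ℝ) + m) * (1 - q))) ≤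
        c^2/(((k:ℝ)+m)*q) + c^2/(((k:ℝ)+m)*(1-q)) := by
      have d1 : ((k:ℝ) - ((k:ℝ)+m)*q)^2/(((k:ℝ)+m)*q) ≤ c^2/(((k:ℝ)+m)*q) := by
        apply div_le_div_of_nonneg_right hsq1 hnqpos.le
      have d2 : ((m:ℝ) - ((k:ℝ)+m)*(1-q))^2/(((k:ℝ)+m)*(1-q)) ≤ c^2/(((k:ℝ)+m)*(1-q)) := by
        apply div_le_div_of_nonneg_right (by rw [hsq2]; exact hsq1) hn1qpos.le
      linarith [hx1.2, hx2.2, d1, d2, hAB]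
    have heq : c^2/(((k:ℝ)+m)*q) + c^2/(((k:ℝ)+m)*(1-q)) = c^2/(((k:ℝ)+m)*(q*(1-q))) := by
      rw [div_add_div _ _ hnqpos.ne' hn1qpos.ne',
        div_eq_div_iff (mul_pos hnqpos hn1qpos).ne' (mul_pos hnrpos ha).ne']
      ring
    rw [heq] at hup
    rw [abs_le]
    exact ⟨by linarith only [hlo, hup], hup⟩
  -- sqrt-factor term
  set d : ℝ := (k:ℝ)*m/((((k:ℝ)+m))^2*(q*(1-q))) - 1 with hd_def
  have h1d : 1 + d = (k:ℝ)*m/((((k:ℝ)+m))^2*(q*(1-q))) := by rw [hd_def]; ring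
  have hdenpos : (0:ℝ) < (((k:ℝ)+m))^2*(q*(1-q)) := mul_pos (pow_pos hnrpos 2) ha
  have h1dpos : (0:ℝ) < 1 + d := by
    rw [h1d]; exact div_pos (mul_pos hkrpos hmrpos) hdenpos
  have harg : ((((k:ℝ) + m)) ^ 2 * (q * (1 - q))) / ((k:ℝ) * m) = (1+d)⁻¹ := by
    rw [h1d, inv_div]
  have hdeq : d = (((k:ℝ) - ((k:ℝ)+m)*q) * ((((k:ℝ)+m))*(1-2*q) - ((k:ℝ) - ((k:ℝ)+m)*q)))
      / ((((k:ℝ)+m))^2*(q*(1-q))) := by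
    rw [hd_def]; field_simp; ring
  have hnum : |((k:ℝ) - ((k:ℝ)+m)*q) * ((((k:ℝ)+m))*(1-2*q) - ((k:ℝ) - ((k:ℝ)+m)*q))| ≤
      c * ((1+c)*((k:ℝ)+m)) := by
    rw [abs_mul]
    apply mul_le_mul hu ?_ (abs_nonneg _) hc.le
    have h0 : |(((k:ℝ)+m))*(1-2*q)| ≤ (k:ℝ)+m := by
      rw [abs_mul, abs_of_pos hnrpos]
      have h1 : |1-2*q| ≤ 1 := abs_le.mpr ⟨by linarith, by linarith⟩
      have h2 : ((k:ℝ)+m) * |1-2*q| ≤ ((k:ℝ)+m) * 1 :=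
        mul_le_mul_of_nonneg_left h1 hnrpos.le
      linarith only [h2]
    calc |(((k:ℝ)+m))*(1-2*q) - ((k:ℝ) - ((k:ℝ)+m)*q)|
        ≤ |(((k:ℝ)+m))*(1-2*q)| + |(k:ℝ) - ((k:ℝ)+m)*q| := abs_sub _ _
      _ ≤ ((k:ℝ)+m) + c := by linarith [hu]
      _ ≤ (1+c)*((k:ℝ)+m) := by
          have h3 : c*1 ≤ c*((k:ℝ)+m) := mul_le_mul_of_nonneg_left (by linarith) hc.le
          linarith only [h3]
  have hdabs : |d| ≤ c*(1+c)/((q*(1-q))*((k:ℝ)+m)) := by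
    rw [hdeq, abs_div, abs_of_pos hdenpos]
    calc |((k:ℝ) - ((k:ℝ)+m)*q) * ((((k:ℝ)+m))*(1-2*q) - ((k:ℝ) - ((k:ℝ)+m)*q))|
          / ((((k:ℝ)+m))^2*(q*(1-q)))
        ≤ (c * ((1+c)*((k:ℝ)+m))) / ((((k:ℝ)+m))^2*(q*(1-q))) :=
          div_le_div_of_nonneg_right hnum hdenpos.le
      _ = c*(1+c)/((q*(1-q))*((k:ℝ)+m)) := by
          rw [div_eq_div_iff hdenpos.ne' (mul_pos ha hnrpos).ne']
          ring
  have hdhalf : |d| ≤ 1/2 := by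
    refine hdabs.trans ?_
    rw [div_le_div_iff₀ (mul_pos ha hnrpos) two_pos]
    linarith only [hnc]
  have hE2 : |1 / 2 * Real.log ((((k:ℝ) + m) ^ 2 * (q * (1 - q))) / ((k:ℝ) * m))| ≤
      c*(1+c)/((q*(1-q))*((k:ℝ)+m)) := by
    rw [harg, Real.log_inv, abs_mul, abs_neg]
    have := abs_log_one_add_le hdhalf
    have h14 : |(1:ℝ)/2| = 1/2 := by norm_num
    rw [h14]
    linarith only [this, hdabs]
  -- assemble
  have hC0nr : C0/((k:ℝ)+m) = 1/(2*((k:ℝ)+m)) + (1/(((k:ℝ)+m)*q) + 1/(((k:ℝ)+m)*(1-q)))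
      + c*(1+c)/((q*(1-q))*((k:ℝ)+m)) + c^2/(((k:ℝ)+m)*(q*(1-q))) := by
    have e1 : 1/(((k:ℝ)+m)*q) + 1/(((k:ℝ)+m)*(1-q)) = 1/(((k:ℝ)+m)*(q*(1-q))) := by
      rw [div_add_div _ _ hnqpos.ne' hn1qpos.ne',
        div_eq_div_iff (mul_pos hnqpos hn1qpos).ne' (mul_pos hnrpos ha).ne']
      ring
    rw [hC0_def, e1]
    generalize (q*(1-q) : ℝ) = B
    generalize ((k:ℝ) + (m:ℝ)) = A
    ring
  have hEabs : |(((Real.log (stirlingSeq (k + m)) - Real.log (Real.sqrt Real.pi))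
        - (Real.log (stirlingSeq k) - Real.log (Real.sqrt Real.pi))
        - (Real.log (stirlingSeq m) - Real.log (Real.sqrt Real.pi)))
      + 1 / 2 * Real.log ((((k:ℝ) + m) ^ 2 * (q * (1 - q))) / ((k:ℝ) * m))
      - ((k:ℝ) * Real.log ((k:ℝ) / (((k:ℝ) + m) * q))
         + (m:ℝ) * Real.log ((m:ℝ) / (((k:ℝ) + m) * (1 - q)))))| ≤ C0 / ((k:ℝ)+m) := by
    refine (habs3 _ _ _).trans ?_
    rw [hC0nr]
    linarith only [hE1, hE2, hE3]
  have hEle1 : C0/((k:ℝ)+m) ≤ 1 := by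
    rw [div_le_one hnrpos]; exact hnC0
  refine (Real.abs_exp_sub_one_le (hEabs.trans hEle1)).trans ?_
  rw [show 2*C0/((k:ℝ)+m) = 2*(C0/((k:ℝ)+m)) by ring]
  linarith only [hEabs]
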